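/- Let G₁ and G₂ be connected strongly regular graphs with the same parameters (n, d, λ, μ). Then for every i ∈ V₁ and j ∈ V₂, the 𝔰¹-labels 𝔰¹_{G₁}(i) and 𝔰¹_{G₂}(j) are equal (as multisets of node labels at every level), and hence 𝔰¹_{G₁} = 𝔰¹_{G₂}. In particular, 𝔰¹ cannot distinguish non-isomorphic strongly regular graphs with equal parameters. -/

import Mathlib

/-- Hereditarily structured labels of refinement depth `l`. -/
def LblT : ℕ → Type
  | 0 => ℕ
  | l + 1 => LblT l × Multiset (LblT l)

variable {V : Type} [Fintype V] [DecidableEq V]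

/-- The perfect-aggregation (`𝔰`) label of node `i` at refinement level `l`, starting
from the base coloring `c`:  level `0` is the base color, and level `l+1` pairs the
previous label with the multiset of previous labels of the neighbors. -/
def sLabel (G : SimpleGraph V) [DecidableRel G.Adj] (c : V → ℕ) :
    (l : ℕ) → V → LblT l
  | 0, i => c i
  | l + 1, i =>
      ((sLabel G c l i, (G.neighborFinset i).val.map (sLabel G c l)) :
        LblT l × Multiset (LblT l))

/-- The base coloring `i ↦ Σ_q q·δ_{i,i_q}` determined by the list of distinguished
nodes `pref = [i₁, …, i_q]` (1-indexed, as in the paper). -/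
def baseColor (pref : List V) (i : V) : ℕ :=
  ((List.range pref.length).map fun q => if pref[q]? = some i then q + 1 else 0).sum

/-- The row of node `i` in the label matrix: its labels at all levels. -/
def sRow (G : SimpleGraph V) [DecidableRel G.Adj] (c : V → ℕ) (i : V) :
    (l : ℕ) → LblT l :=
  fun l => sLabel G c l i

/-- Type of `r`-fold aggregated labels: at depth `0`, a label matrix regarded as the
multiset of its rows; each aggregation step forms a multiset. -/
def AggT : ℕ → Type
  | 0 => Multiset ((l : ℕ) → LblT l)
  | r + 1 => Multiset (AggT r)

/-- The aggregated label `𝔰ᵏ_G(i₁,…,i_q)` where `pref = [i₁,…,i_q]` and `r` further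
distinguished nodes remain to be chosen (`r = k - q`). -/
def sAgg (G : SimpleGraph V) [DecidableRel G.Adj] : (r : ℕ) → List V → AggT r
  | 0, pref => Finset.univ.val.map (fun i => sRow G (baseColor pref) i)
  | r + 1, pref =>
      ((Finset.univ.filter (fun i => i ∉ pref)).val.map
        (fun i => sAgg G r (pref ++ [i])))

/-- The `𝔰ᵏ` fingerprint of the graph `G`. -/
def sFingerprint (G : SimpleGraph V) [DecidableRel G.Adj] (k : ℕ) : AggT k :=
  sAgg G k []

section Aux

set_option linter.unusedTactic false
set_option linter.unreachableTactic false

lemma map_partition {V α : Type} (m : Multiset V) (c : V → ℕ) (f : ℕ → α)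
    (hc : ∀ k ∈ m, c k ≤ 2) :
    m.map (fun k => f (c k)) =
      Multiset.replicate (Multiset.card (m.filter (fun k => c k = 0))) (f 0) +
      Multiset.replicate (Multiset.card (m.filter (fun k => c k = 1))) (f 1) +
      Multiset.replicate (Multiset.card (m.filter (fun k => c k = 2))) (f 2) := by
  induction m using Multiset.induction with
  | empty => simp
  | cons a s ih =>
    have ha := hc a (Multiset.mem_cons_self a s)
    have hs : ∀ k ∈ s, c k ≤ 2 := fun k hk => hc k (Multiset.mem_cons_of_mem hk)
    interval_cases h : c a <;>
      simp [Multiset.filter_cons, ih hs, h, Multiset.replicate_succ,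
        Multiset.singleton_add] <;> abel

/-- The class of `j` relative to the distinguished node `i`. -/
def cls (G : SimpleGraph V) [DecidableRel G.Adj] (i j : V) : ℕ :=
  if j = i then 0 else if G.Adj i j then 1 else 2

lemma cls_le_two (G : SimpleGraph V) [DecidableRel G.Adj] (i j : V) :
    cls G i j ≤ 2 := by
  unfold cls; split <;> [omega; split <;> omega]


/-- counts of class-0, class-1 neighbors, and degree -/
lemma card_cls_neighbors (G : SimpleGraph V) [DecidableRel G.Adj]
    {n d lam mu : ℕ} (h : G.IsSRGWith n d lam mu) (i j : V) :
    (Multiset.card (((G.neighborFinset j).val).filter (fun k => cls G i k = 0)) =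
        (if j = i then 0 else if G.Adj i j then 1 else 0)) ∧
    (Multiset.card (((G.neighborFinset j).val).filter (fun k => cls G i k = 1)) =
        (if j = i then d else if G.Adj i j then lam else mu)) ∧
    (Multiset.card (((G.neighborFinset j).val).filter (fun k => cls G i k = 2)) =
        (if j = i then 0 else if G.Adj i j then d - lam - 1 else d - mu)) := by
  classical
  set s := G.neighborFinset j with hs
  have hf : ∀ (p : V → Prop) (inst : DecidablePred p),
      Multiset.card ((s.val).filter p) = (s.filter p).card := fun p inst => rfl
  have hcardfull : s.card = d := h.regular j
  -- the three finset cardinalities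
  have key0 : (s.filter (fun k => cls G i k = 0)).card =
      (if j = i then 0 else if G.Adj i j then 1 else 0) := by
    by_cases hji : j = i
    · subst hji
      rw [if_pos rfl]
      rw [Finset.card_eq_zero, Finset.filter_eq_empty_iff]
      intro k hk
      rw [SimpleGraph.mem_neighborFinset] at hk
      have hkj : k ≠ j := fun e => G.loopless.irrefl j (e ▸ hk)
      unfold cls
      rw [if_neg hkj, if_pos hk]
      omega
    · rw [if_neg hji]
      by_cases hadj : G.Adj i j
      · rw [if_pos hadj]
        have : s.filter (fun k => cls G i k = 0) = {i} := by
          ext k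
          simp only [Finset.mem_filter, hs, SimpleGraph.mem_neighborFinset,
            Finset.mem_singleton]
          constructor
          · rintro ⟨hjk, hc⟩
            unfold cls at hc
            split at hc
            · assumption
            · split at hc <;> omega
          · rintro rfl
            refine ⟨hadj.symm, ?_⟩
            unfold cls
            rw [if_pos rfl]
        rw [this, Finset.card_singleton]
      · rw [if_neg hadj]
        rw [Finset.card_eq_zero, Finset.filter_eq_empty_iff]
        intro k hk
        rw [SimpleGraph.mem_neighborFinset] at hk
        unfold cls
        by_cases hki : k = i
        · subst hki
          exact (hadj hk.symm).elim
        · rw [if_neg hki]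
          split <;> omega
  have key1 : (s.filter (fun k => cls G i k = 1)).card =
      (if j = i then d else if G.Adj i j then lam else mu) := by
    by_cases hji : j = i
    · subst hji
      rw [if_pos rfl]
      have : s.filter (fun k => cls G j k = 1) = s := by
        rw [Finset.filter_eq_self]
        intro k hk
        rw [hs, SimpleGraph.mem_neighborFinset] at hk
        have hkj : k ≠ j := fun e => G.loopless.irrefl j (e ▸ hk)
        unfold cls
        rw [if_neg hkj, if_pos hk]
      rw [this, hcardfull]
    · have hcommon : (s.filter (fun k => cls G i k = 1)).card =
          Fintype.card (G.commonNeighbors i j) := by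
        rw [← Set.toFinset_card]
        congr 1
        ext k
        simp only [Finset.mem_filter, hs, SimpleGraph.mem_neighborFinset,
          Set.mem_toFinset, SimpleGraph.mem_commonNeighbors]
        constructor
        · rintro ⟨hjk, hc⟩
          unfold cls at hc
          split at hc
          · omega
          · split at hc
            · exact ⟨‹G.Adj i k›, hjk⟩
            · omega
        · rintro ⟨hik, hjk⟩
          have hki : k ≠ i := fun e => G.loopless.irrefl i (e ▸ hik)
          refine ⟨hjk, ?_⟩
          unfold cls
          rw [if_neg hki, if_pos hik]
      rw [if_neg hji]
      by_cases hadj : G.Adj i j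
      · rw [if_pos hadj, hcommon, h.of_adj i j hadj]
      · rw [if_neg hadj, hcommon, h.of_not_adj (fun e => hji e.symm) hadj]
  have keysum : (s.filter (fun k => cls G i k = 0)).card +
      (s.filter (fun k => cls G i k = 1)).card +
      (s.filter (fun k => cls G i k = 2)).card = d := by
    have A : (s.filter (fun k => cls G i k = 0)).card +
        (s.filter (fun k => ¬ cls G i k = 0)).card = s.card :=
      Finset.card_filter_add_card_filter_not _
    have B : ((s.filter (fun k => ¬ cls G i k = 0)).filter (fun k => cls G i k = 1)).card +
        ((s.filter (fun k => ¬ cls G i k = 0)).filter (fun k => ¬ cls G i k = 1)).card =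
        (s.filter (fun k => ¬ cls G i k = 0)).card :=
      Finset.card_filter_add_card_filter_not _
    have C : (s.filter (fun k => ¬ cls G i k = 0)).filter (fun k => cls G i k = 1) =
        s.filter (fun k => cls G i k = 1) := by
      rw [Finset.filter_filter]
      apply Finset.filter_congr
      intro k _
      have := cls_le_two G i k
      constructor
      · intro hh; omega
      · intro hh; exact ⟨by omega, by omega⟩
    have D : (s.filter (fun k => ¬ cls G i k = 0)).filter (fun k => ¬ cls G i k = 1) =
        s.filter (fun k => cls G i k = 2) := by
      rw [Finset.filter_filter]
      apply Finset.filter_congr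
      intro k _
      have := cls_le_two G i k
      constructor
      · intro hh; omega
      · intro hh; exact ⟨by omega, by omega⟩
    rw [C, D] at B
    omega
  have key2 : (s.filter (fun k => cls G i k = 2)).card =
      (if j = i then 0 else if G.Adj i j then d - lam - 1 else d - mu) := by
    by_cases hji : j = i
    · rw [if_pos hji] at key0 key1 ⊢
      omega
    · by_cases hadj : G.Adj i j
      · rw [if_neg hji, if_pos hadj] at key0 key1 ⊢
        omega
      · rw [if_neg hji, if_neg hadj] at key0 key1 ⊢
        omega
  exact ⟨by rw [hf]; exact key0, by rw [hf]; exact key1, by rw [hf]; exact key2⟩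

end Aux

section Aux2

set_option linter.unusedSectionVars false

/-- Universal label function depending only on the parameters. -/
def Fm (d lam mu : ℕ) : (l : ℕ) → ℕ → LblT l
  | 0, c => ((if c = 0 then 1 else 0 : ℕ) : LblT 0)
  | l+1, c =>
      ((Fm d lam mu l c,
        Multiset.replicate (if c = 0 then 0 else if c = 1 then 1 else 0)
          (Fm d lam mu l 0) +
        Multiset.replicate (if c = 0 then d else if c = 1 then lam else mu)
          (Fm d lam mu l 1) +
        Multiset.replicate (if c = 0 then 0 else if c = 1 then d - lam - 1 else d - mu)
          (Fm d lam mu l 2)) : LblT l × Multiset (LblT l))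

lemma ite_cls {α : Type} (G : SimpleGraph V) [DecidableRel G.Adj] (i j : V)
    (x y z : α) :
    (if cls G i j = 0 then x else if cls G i j = 1 then y else z) =
      (if j = i then x else if G.Adj i j then y else z) := by
  unfold cls
  by_cases h1 : j = i <;> by_cases h2 : G.Adj i j <;> simp [h1, h2]

lemma sLabel_eq_Fm (G : SimpleGraph V) [DecidableRel G.Adj]
    {n d lam mu : ℕ} (h : G.IsSRGWith n d lam mu) (i : V) :
    ∀ (l : ℕ) (j : V), sLabel G (baseColor [i]) l j = Fm d lam mu l (cls G i j) := by
  intro l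
  induction l with
  | zero =>
    intro j
    show baseColor [i] j = Fm d lam mu 0 (cls G i j)
    unfold baseColor Fm cls
    by_cases hji : j = i
    · subst hji
      rw [show ([j] : List V).length = 1 from rfl, List.range_succ]
      simp
    · have h1 : ¬ ((if j = i then 0 else if G.Adj i j then 1 else 2) = 0) := by
        rw [if_neg hji]; split <;> omega
      rw [if_neg h1, show ([i] : List V).length = 1 from rfl, List.range_succ]
      simp [show i ≠ j from fun e => hji e.symm]
  | succ l ih =>
    intro j
    show ((sLabel G (baseColor [i]) l j,
        (G.neighborFinset j).val.map (sLabel G (baseColor [i]) l)) :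
        LblT l × Multiset (LblT l)) = Fm d lam mu (l+1) (cls G i j)
    unfold Fm
    rw [Prod.mk.injEq]
    refine ⟨ih j, ?_⟩
    have hmap : (G.neighborFinset j).val.map (sLabel G (baseColor [i]) l) =
        (G.neighborFinset j).val.map (fun k => Fm d lam mu l (cls G i k)) :=
      Multiset.map_congr rfl (fun k _ => ih k)
    rw [hmap, map_partition _ _ _ (fun k _ => cls_le_two G i k)]
    obtain ⟨h0, h1, h2⟩ := card_cls_neighbors G h i j
    rw [h0, h1, h2, ite_cls G i j, ite_cls G i j, ite_cls G i j]

/-- The universal row of class `c`. -/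
def rowF (d lam mu : ℕ) (c : ℕ) : (l : ℕ) → LblT l := fun l => Fm d lam mu l c

/-- The universal label matrix. -/
def matF (n d lam mu : ℕ) : AggT 0 :=
  Multiset.replicate 1 (rowF d lam mu 0) + Multiset.replicate d (rowF d lam mu 1) +
    Multiset.replicate (n - 1 - d) (rowF d lam mu 2)

lemma card_cls_univ (G : SimpleGraph V) [DecidableRel G.Adj]
    {n d lam mu : ℕ} (h : G.IsSRGWith n d lam mu) (i : V) :
    (Multiset.card ((Finset.univ.val (α := V)).filter (fun k => cls G i k = 0)) = 1) ∧
    (Multiset.card ((Finset.univ.val (α := V)).filter (fun k => cls G i k = 1)) = d) ∧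
    (Multiset.card ((Finset.univ.val (α := V)).filter (fun k => cls G i k = 2)) = n - 1 - d) := by
  classical
  set s : Finset V := Finset.univ with hs
  have hf : ∀ (p : V → Prop) (inst : DecidablePred p),
      Multiset.card ((s.val).filter p) = (s.filter p).card := fun p inst => rfl
  have key0 : (s.filter (fun k => cls G i k = 0)).card = 1 := by
    have : s.filter (fun k => cls G i k = 0) = {i} := by
      ext k
      simp only [Finset.mem_filter, hs, Finset.mem_univ, true_and, Finset.mem_singleton]
      unfold cls
      constructor
      · intro hc
        split at hc
        · assumption
        · split at hc <;> omega
      · rintro rfl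
        rw [if_pos rfl]
    rw [this, Finset.card_singleton]
  have key1 : (s.filter (fun k => cls G i k = 1)).card = d := by
    have : s.filter (fun k => cls G i k = 1) = G.neighborFinset i := by
      ext k
      simp only [Finset.mem_filter, hs, Finset.mem_univ, true_and,
        SimpleGraph.mem_neighborFinset]
      unfold cls
      constructor
      · intro hc
        split at hc
        · omega
        · split at hc
          · assumption
          · omega
      · intro hik
        have hki : k ≠ i := fun e => G.loopless.irrefl i (e ▸ hik)
        rw [if_neg hki, if_pos hik]
    rw [this]
    exact h.regular i
  have keysum : (s.filter (fun k => cls G i k = 0)).card +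
      (s.filter (fun k => cls G i k = 1)).card +
      (s.filter (fun k => cls G i k = 2)).card = n := by
    have A : (s.filter (fun k => cls G i k = 0)).card +
        (s.filter (fun k => ¬ cls G i k = 0)).card = s.card :=
      Finset.card_filter_add_card_filter_not _
    have B : ((s.filter (fun k => ¬ cls G i k = 0)).filter (fun k => cls G i k = 1)).card +
        ((s.filter (fun k => ¬ cls G i k = 0)).filter (fun k => ¬ cls G i k = 1)).card =
        (s.filter (fun k => ¬ cls G i k = 0)).card :=
      Finset.card_filter_add_card_filter_not _
    have C : (s.filter (fun k => ¬ cls G i k = 0)).filter (fun k => cls G i k = 1) =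
        s.filter (fun k => cls G i k = 1) := by
      rw [Finset.filter_filter]
      apply Finset.filter_congr
      intro k _
      have := cls_le_two G i k
      constructor
      · intro hh; omega
      · intro hh; exact ⟨by omega, by omega⟩
    have D : (s.filter (fun k => ¬ cls G i k = 0)).filter (fun k => ¬ cls G i k = 1) =
        s.filter (fun k => cls G i k = 2) := by
      rw [Finset.filter_filter]
      apply Finset.filter_congr
      intro k _
      have := cls_le_two G i k
      constructor
      · intro hh; omega
      · intro hh; exact ⟨by omega, by omega⟩
    rw [C, D] at B
    have hcard : s.card = n := by rw [hs, Finset.card_univ, h.card]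
    omega
  have key2 : (s.filter (fun k => cls G i k = 2)).card = n - 1 - d := by omega
  exact ⟨by rw [hf]; exact key0, by rw [hf]; exact key1, by rw [hf]; exact key2⟩

lemma sAgg_zero_eq (G : SimpleGraph V) [DecidableRel G.Adj]
    {n d lam mu : ℕ} (h : G.IsSRGWith n d lam mu) (i : V) :
    sAgg G 0 [i] = matF n d lam mu := by
  show Finset.univ.val.map (fun j => sRow G (baseColor [i]) j) = matF n d lam mu
  have hrow : ∀ j : V, sRow G (baseColor [i]) j = rowF d lam mu (cls G i j) := by
    intro j
    funext l
    exact sLabel_eq_Fm G h i l j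
  have hmap : Finset.univ.val.map (fun j => sRow G (baseColor [i]) j) =
      Finset.univ.val.map (fun j => rowF d lam mu (cls G i j)) :=
    Multiset.map_congr rfl (fun j _ => hrow j)
  rw [hmap, map_partition _ _ _ (fun k _ => cls_le_two G i k)]
  obtain ⟨h0, h1, h2⟩ := card_cls_univ G h i
  rw [h0, h1, h2]
  rfl

end Aux2

/-- Connected strongly regular graphs with the same parameters `(n,d,λ,μ)` get identical
`𝔰¹`-labels at every node, hence identical `𝔰¹` fingerprints. -/
theorem srg_s1_labels_eq {V₁ V₂ : Type} [Fintype V₁] [DecidableEq V₁]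
    [Fintype V₂] [DecidableEq V₂] (G₁ : SimpleGraph V₁) (G₂ : SimpleGraph V₂)
    [DecidableRel G₁.Adj] [DecidableRel G₂.Adj] (n d lam mu : ℕ)
    (h₁ : G₁.IsSRGWith n d lam mu) (h₂ : G₂.IsSRGWith n d lam mu)
    (hc₁ : G₁.Connected) (hc₂ : G₂.Connected) :
    (∀ (i : V₁) (j : V₂), sAgg G₁ 0 [i] = sAgg G₂ 0 [j]) ∧
      sFingerprint G₁ 1 = sFingerprint G₂ 1 := by
  constructor
  · intro i j
    rw [sAgg_zero_eq G₁ h₁ i, sAgg_zero_eq G₂ h₂ j]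
  · have key : ∀ {V : Type} [Fintype V] [DecidableEq V] (G : SimpleGraph V)
        [DecidableRel G.Adj], G.IsSRGWith n d lam mu →
        sFingerprint G 1 = Multiset.replicate n (matF n d lam mu) := by
      intro V _ _ G _ h
      show ((Finset.univ.filter (fun i => i ∉ ([] : List V))).val.map
        (fun i => sAgg G 0 ([] ++ [i]))) = _
      have hfilter : Finset.univ.filter (fun i => i ∉ ([] : List V)) = Finset.univ := by
        apply Finset.filter_true_of_mem
        intro x _
        simp
      rw [hfilter]
      have : ∀ i ∈ (Finset.univ (α := V)).val, sAgg G 0 ([] ++ [i]) = matF n d lam mu :=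
        fun i _ => sAgg_zero_eq G h i
      rw [Multiset.map_congr rfl this, Multiset.map_const']
      congr 1
      show Finset.univ.card = n
      rw [Finset.card_univ, h.card]
    rw [key G₁ h₁, key G₂ h₂]
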